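/- Let A ∈ M_{r×m}(ℤ) have rank r, let V ∈ M_m(ℤ) be a Hermite multiplier of A with W = V⁻¹, partitioned V = [V_𝔞 | V_𝔟] and W = [W_𝔞 ; W_𝔟], and let P ∈ M_{m×s}(ℤ) satisfy A·P = 0 (with s ≤ m−r). Then the following are equivalent: (i) there exist a matrix E ∈ M_{m×(m−r−s)}(ℤ) and a unimodular matrix C ∈ M_{m−r}(ℤ) such that V_𝔟·C = [P | E]; (ii) the matrix W_𝔟·P ∈ M_{(m−r)×s}(ℤ) can be extended to a unimodular matrix, i.e. there exists Ẽ ∈ M_{(m−r)×(m−r−s)}(ℤ) such that [W_𝔟·P | Ẽ] is unimodular. -/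

import Mathlib

open Matrix

lemma mapQ_mul {n p q : Type*} [Fintype p] (X : Matrix n p ℤ) (Y : Matrix p q ℤ) :
    (X * Y).map ((↑) : ℤ → ℚ) = X.map ((↑) : ℤ → ℚ) * Y.map ((↑) : ℤ → ℚ) := by
  ext i j
  simp [Matrix.mul_apply, Matrix.map_apply]


/-- Theorem on rewriting with chosen invariants.  Let `A ∈ M_{r×m}(ℤ)`
have rank `r`, let `V` be a Hermite multiplier of `A` (unimodular with the last `m−r`
columns of `AV` zero), `W = V⁻¹`, partitioned `V = [V_𝔞 | V_𝔟]`, `W = [W_𝔞 ; W_𝔟]`, and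
let `P ∈ M_{m×s}(ℤ)` with `A·P = 0` and `s ≤ m − r`.  Then there exist `E` and a
unimodular `C` with `V_𝔟·C = [P | E]` if and only if `W_𝔟·P` extends to a unimodular
matrix `[W_𝔟·P | Ẽ]`.  Here `m − r = s + d`. -/
theorem rewrite_in_chosen_invariants_iff (r s d m : ℕ) (hm : m = r + (s + d))
    (A : Matrix (Fin r) (Fin m) ℤ)
    (hrank : (A.map ((↑) : ℤ → ℚ)).rank = r)
    (V : Matrix (Fin m) (Fin r ⊕ (Fin s ⊕ Fin d)) ℤ)
    (W : Matrix (Fin r ⊕ (Fin s ⊕ Fin d)) (Fin m) ℤ)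
    (hVW : V * W = 1) (hWV : W * V = 1)
    (hAV : ∀ (i : Fin r) (j : Fin s ⊕ Fin d), (A * V) i (Sum.inr j) = 0)
    (P : Matrix (Fin m) (Fin s) ℤ) (hAP : A * P = 0) :
    (∃ (E : Matrix (Fin m) (Fin d) ℤ)
        (C : Matrix (Fin s ⊕ Fin d) (Fin s ⊕ Fin d) ℤ),
      IsUnit C.det ∧ V.submatrix id Sum.inr * C = Matrix.fromCols P E)
    ↔ (∃ Etil : Matrix (Fin s ⊕ Fin d) (Fin d) ℤ,
        IsUnit (Matrix.fromCols (W.submatrix Sum.inr id * P) Etil).det) := by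
  set Va := V.submatrix id Sum.inl with hVa
  set Vb := V.submatrix id Sum.inr with hVb
  set Wa := W.submatrix Sum.inl id with hWa
  set Wb := W.submatrix Sum.inr id with hWb
  -- V and W as block matrices
  have hVblk : V = fromCols Va Vb := by
    ext i j; cases j <;> rfl
  have hWblk : W = fromRows Wa Wb := by
    ext i j; cases i <;> rfl
  -- Wb * Vb = 1
  have hWbVb : Wb * Vb = 1 := by
    ext i j
    have h1 : (W * V) (Sum.inr i) (Sum.inr j) = (1 : Matrix (Fin r ⊕ (Fin s ⊕ Fin d)) (Fin r ⊕ (Fin s ⊕ Fin d)) ℤ) (Sum.inr i) (Sum.inr j) := by rw [hWV]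
    simp only [Matrix.mul_apply, Matrix.one_apply, Sum.inr.injEq] at h1 ⊢
    simpa [hWb, hVb, Matrix.submatrix_apply] using h1
  -- H
  set H := (A * V).submatrix id Sum.inl with hH
  have hAVblk : A * V = fromCols H 0 := by
    ext i j; cases j with
    | inl j => rfl
    | inr j => simpa using hAV i j
  -- Wa * P = 0
  have key : H * (Wa * P) = 0 := by
    calc H * (Wa * P) = H * (Wa * P) + 0 * (Wb * P) := by rw [Matrix.zero_mul, add_zero]
    _ = fromCols H 0 * fromRows (Wa * P) (Wb * P) := (fromCols_mul_fromRows _ _ _ _).symm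
    _ = (A * V) * (W * P) := by
        rw [hAVblk, hWblk, Matrix.fromRows_mul]
    _ = A * (V * W) * P := by rw [Matrix.mul_assoc, Matrix.mul_assoc, Matrix.mul_assoc]
    _ = 0 := by rw [hVW, Matrix.mul_one, hAP]
  -- over ℚ, rank of A*V is at least r
  have hrankAV : r ≤ ((A * V).map ((↑) : ℤ → ℚ)).rank := by
    have hA : (A.map ((↑) : ℤ → ℚ)) =
        ((A * V).map ((↑) : ℤ → ℚ)) * (W.map ((↑) : ℤ → ℚ)) := by
      rw [← mapQ_mul, Matrix.mul_assoc, hVW, Matrix.mul_one]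
    calc r = (A.map ((↑) : ℤ → ℚ)).rank := hrank.symm
    _ ≤ ((A * V).map ((↑) : ℤ → ℚ)).rank := by
        rw [hA]; exact Matrix.rank_mul_le_left _ _
  have hHmapfact : (A * V).map ((↑) : ℤ → ℚ) =
      (H.map ((↑) : ℤ → ℚ)) * Matrix.fromCols (1 : Matrix (Fin r) (Fin r) ℚ) (0 : Matrix (Fin r) (Fin s ⊕ Fin d) ℚ) := by
    rw [Matrix.mul_fromCols, Matrix.mul_one, Matrix.mul_zero, hAVblk]
    ext i j; cases j <;> simp [Matrix.fromCols]
  have hrankH : (H.map ((↑) : ℤ → ℚ)).rank = r := by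
    apply le_antisymm
    · simpa using (H.map ((↑) : ℤ → ℚ)).rank_le_card_width
    · refine le_trans hrankAV ?_
      rw [hHmapfact]; exact Matrix.rank_mul_le_left _ _
  have hinj : Function.Injective (H.map ((↑) : ℤ → ℚ)).mulVecLin := by
    rw [LinearMap.injective_iff_surjective_of_finrank_eq_finrank rfl]
    rw [← LinearMap.range_eq_top]
    apply Submodule.eq_top_of_finrank_eq
    rw [Module.finrank_pi]
    simpa [Matrix.rank] using hrankH
  have hWaP : Wa * P = 0 := by
    have hmap : (H.map ((↑) : ℤ → ℚ)) * ((Wa * P).map ((↑) : ℤ → ℚ)) = 0 := by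
      rw [← mapQ_mul, key]
      ext i j
      simp
    ext i j
    simp only [Matrix.zero_apply]
    have hcol : (H.map ((↑) : ℤ → ℚ)).mulVecLin (fun k => ((Wa * P) k j : ℚ)) = 0 := by
      funext i'
      have h2 := congrFun (congrFun hmap i') j
      simpa [Matrix.mulVecLin_apply, Matrix.mulVec, Matrix.mul_apply, dotProduct,
        Matrix.map_apply] using h2
    have hz : (fun k => ((Wa * P) k j : ℚ)) = (0 : Fin r → ℚ) := by
      apply hinj
      rw [hcol, map_zero]
    have h3 := congrFun hz i
    simp only [Pi.zero_apply] at h3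
    exact_mod_cast h3
  -- Vb * (Wb * P) = P
  have hVbWbP : Vb * (Wb * P) = P := by
    calc Vb * (Wb * P) = Va * (Wa * P) + Vb * (Wb * P) := by rw [hWaP, Matrix.mul_zero, zero_add]
    _ = fromCols Va Vb * fromRows (Wa * P) (Wb * P) := (fromCols_mul_fromRows _ _ _ _).symm
    _ = V * (W * P) := by rw [← hVblk, hWblk, Matrix.fromRows_mul]
    _ = P := by rw [← Matrix.mul_assoc, hVW, Matrix.one_mul]
  constructor
  · rintro ⟨E, C, hC, hVbC⟩
    refine ⟨Wb * E, ?_⟩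
    have : fromCols (Wb * P) (Wb * E) = C := by
      rw [← Matrix.mul_fromCols, ← hVbC, ← Matrix.mul_assoc, hWbVb, Matrix.one_mul]
    rw [this]; exact hC
  · rintro ⟨Etil, hEtil⟩
    refine ⟨Vb * Etil, fromCols (Wb * P) Etil, hEtil, ?_⟩
    rw [Matrix.mul_fromCols, ← Matrix.mul_assoc, Matrix.mul_assoc Vb Wb P, hVbWbP]
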